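/- For every t ≥ 2, (1/t²) ∫_{1/t}^{1/2} 1/(λ² |log λ|³) dλ ≤ C (t^{-3/2} + 1/(t (log t)³)) for some absolute constant C. -/

import Mathlib

open MeasureTheory intervalIntegral Real

lemma fcont (a b : ℝ) (ha : 0 < a) (hb : b ≤ 1/2) :
    ContinuousOn (fun l : ℝ => 1/(l^2 * |Real.log l| ^ 3)) (Set.Icc a b) := by
  have hsub : Set.Icc a b ⊆ {(0:ℝ)}ᶜ := by
    intro l hl
    simp only [Set.mem_compl_iff, Set.mem_singleton_iff]
    exact (lt_of_lt_of_le ha hl.1).ne'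
  apply ContinuousOn.div continuousOn_const
  · exact ((continuous_pow 2).continuousOn).mul
      (((Real.continuousOn_log.mono hsub).abs).pow 3)
  · intro l hl
    have hl0 : 0 < l := lt_of_lt_of_le ha hl.1
    have hl1 : l < 1 := lt_of_le_of_lt (hl.2.trans hb) (by norm_num)
    have : Real.log l < 0 := Real.log_neg hl0 hl1
    have : |Real.log l| > 0 := abs_pos.mpr this.ne
    positivity

lemma fint (a b : ℝ) (ha : 0 < a) (hab : a ≤ b) (hb : b ≤ 1/2) :
    IntervalIntegrable (fun l : ℝ => 1/(l^2 * |Real.log l| ^ 3)) volume a b := by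
  have h := fcont a b ha hb
  rw [← Set.uIcc_of_le hab] at h
  exact h.intervalIntegrable

lemma key (a b m : ℝ) (ha : 0 < a) (hab : a ≤ b) (hb : b ≤ 1/2) (hm : 0 < m)
    (hbound : ∀ l ∈ Set.Icc a b, m ≤ |Real.log l|) :
    ∫ l in a..b, 1/(l^2 * |Real.log l| ^ 3) ≤ (1/m^3) * (1/a) := by
  have h0 : (0:ℝ) ∉ Set.uIcc a b := by
    rw [Set.uIcc_of_le hab]
    intro h
    exact absurd h.1 (not_le.mpr ha)
  have hgint : IntervalIntegrable (fun l : ℝ => 1/m^3 * l ^ (-2 : ℤ)) volume a b := by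
    apply IntervalIntegrable.const_mul
    exact intervalIntegral.intervalIntegrable_zpow (Or.inr h0)
  have hmono : ∫ l in a..b, 1/(l^2 * |Real.log l| ^ 3) ≤ ∫ l in a..b, 1/m^3 * l ^ (-2 : ℤ) := by
    apply intervalIntegral.integral_mono_on hab (fint a b ha hab hb) hgint
    intro x hx
    have hx0 : 0 < x := lt_of_lt_of_le ha hx.1
    have hmx := hbound x hx
    have h1 : 1/(x^2 * |Real.log x| ^ 3) ≤ 1/(x^2 * m ^ 3) := by
      apply one_div_le_one_div_of_le (by positivity)
      exact mul_le_mul_of_nonneg_left (pow_le_pow_left₀ hm.le hmx 3) (sq_nonneg x)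
    calc 1/(x^2 * |Real.log x| ^ 3) ≤ 1/(x^2 * m ^ 3) := h1
      _ = 1/m^3 * x ^ (-2 : ℤ) := by
          rw [zpow_neg]
          have hm' : m ≠ 0 := hm.ne'
          have hx' : x ≠ 0 := hx0.ne'
          rw [one_div, one_div, mul_inv]; exact mul_comm _ _
  have hcalc : ∫ l in a..b, 1/m^3 * l ^ (-2 : ℤ) = 1/m^3 * ((b ^ (-1:ℤ) - a ^ (-1:ℤ)) / (-1)) := by
    rw [intervalIntegral.integral_const_mul, integral_zpow (Or.inr ⟨by norm_num, h0⟩)]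
    norm_num
  have hb0 : 0 < b := lt_of_lt_of_le ha hab
  have : (b ^ (-1:ℤ) - a ^ (-1:ℤ)) / (-1) ≤ 1/a := by
    simp only [zpow_neg, zpow_one]
    rw [div_le_iff_of_neg (by norm_num : (-1:ℝ) < 0)]
    have : (0:ℝ) < b⁻¹ := by positivity
    have h2 : a⁻¹ = 1/a := (one_div a).symm
    nlinarith [this]
  calc ∫ l in a..b, 1/(l^2 * |Real.log l| ^ 3) ≤ 1/m^3 * ((b ^ (-1:ℤ) - a ^ (-1:ℤ)) / (-1)) := by
        rw [← hcalc]; exact hmono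
    _ ≤ 1/m^3 * (1/a) := by
        apply mul_le_mul_of_nonneg_left this (by positivity)

/-- For t ≥ 2, (1/t²) ∫_{1/t}^{1/2} 1/(λ²|log λ|³) dλ ≤ C (t^{-3/2} + 1/(t (log t)³)). -/
theorem stmt2 : ∃ C : ℝ, ∀ t : ℝ, 2 ≤ t →
    (1/t^2) * ∫ l in Set.Icc (1/t) (1/2 : ℝ), 1 / (l^2 * |Real.log l| ^ 3)
      ≤ C * (t ^ (-(3:ℝ)/2) + 1 / (t * (Real.log t) ^ 3)) := by
  use 16
  intro t ht
  have ht0 : (0:ℝ) < t := by linarith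
  have hL : (0.6931471803:ℝ) < Real.log 2 := Real.log_two_gt_d9
  have hL0 : (0:ℝ) < Real.log 2 := by linarith
  have hlogt : Real.log 2 ≤ Real.log t := Real.log_le_log (by norm_num) ht
  have hlt0 : 0 < Real.log t := lt_of_lt_of_le hL0 hlogt
  have h1t : (0:ℝ) < 1/t := by positivity
  have h12 : 1/t ≤ 1/2 := by
    rw [div_le_div_iff₀ ht0 (by norm_num)]; linarith
  have hs0 : 0 < Real.sqrt t := Real.sqrt_pos.mpr ht0
  have hss : Real.sqrt t * Real.sqrt t = t := Real.mul_self_sqrt ht0.le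
  set s := Real.sqrt t with hs_def
  have hrpow : t ^ (-(3:ℝ)/2) = 1/(t * s) := by
    rw [show (-(3:ℝ)/2) = -(3/2) by ring, Real.rpow_neg ht0.le,
      show ((3:ℝ)/2) = 1 + 1/2 by ring, Real.rpow_add ht0, Real.rpow_one,
      ← Real.sqrt_eq_rpow]
    simp [one_div]
    exact Or.inl hs_def.symm
  have hL3 : (0.33:ℝ) ≤ (Real.log 2)^3 := by
    have h2 : (0.48:ℝ) ≤ (Real.log 2)^2 := by nlinarith
    nlinarith
  have hP0 : 0 < 1/(t * (Real.log t)^3) := by positivity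
  rw [MeasureTheory.integral_Icc_eq_integral_Ioc, ← intervalIntegral.integral_of_le h12]
  rcases le_or_gt t 4 with h4 | h4
  · -- small t : crude bound
    have hbound : ∀ l ∈ Set.Icc (1/t) (1/2:ℝ), Real.log 2 ≤ |Real.log l| := by
      intro l hl
      have hl0 : 0 < l := lt_of_lt_of_le h1t hl.1
      have h := Real.log_le_log hl0 hl.2
      rw [show (1/2:ℝ) = 2⁻¹ by norm_num, Real.log_inv] at h
      have : Real.log 2 ≤ -Real.log l := by linarith
      exact this.trans (neg_le_abs _)
    have key1 := key (1/t) (1/2) (Real.log 2) h1t h12 le_rfl hL0 hbound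
    rw [one_div_one_div] at key1
    have hs2 : s ≤ 2 := by
      rw [hs_def, show (2:ℝ) = Real.sqrt 4 by
        rw [show (4:ℝ) = 2^2 by norm_num, Real.sqrt_sq]; norm_num]
      exact Real.sqrt_le_sqrt h4
    calc (1/t^2) * ∫ l in (1/t)..(1/2:ℝ), 1 / (l^2 * |Real.log l| ^ 3)
        ≤ (1/t^2) * (1/(Real.log 2)^3 * t) :=
          mul_le_mul_of_nonneg_left key1 (by positivity)
      _ ≤ 16 * (1/(t * s)) := by
          have hs16 : s ≤ 16 * (Real.log 2)^3 := by nlinarith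
          rw [show (1/t^2)*(1/(Real.log 2)^3*t) = t/((Real.log 2)^3*t^2) by ring,
            show (16:ℝ)*(1/(t*s)) = 16/(t*s) by ring,
            div_le_div_iff₀ (by positivity) (by positivity)]
          nlinarith [mul_le_mul_of_nonneg_left hs16 (sq_nonneg t)]
      _ ≤ 16 * (t ^ (-(3:ℝ)/2) + 1 / (t * (Real.log t) ^ 3)) := by
          rw [hrpow]; nlinarith
  · -- large t : split at s⁻¹
    have hs2 : 2 ≤ s := by
      rw [hs_def, show (2:ℝ) = Real.sqrt 4 by
        rw [show (4:ℝ) = 2^2 by norm_num, Real.sqrt_sq]; norm_num]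
      exact Real.sqrt_le_sqrt h4.le
    have hst : s ≤ t := by nlinarith
    have h1ts : 1/t ≤ s⁻¹ := by
      rw [← one_div]
      exact one_div_le_one_div_of_le hs0 hst
    have hsi12 : s⁻¹ ≤ 1/2 := by
      rw [← one_div]
      rw [div_le_div_iff₀ hs0 (by norm_num)]; linarith
    have hsi0 : (0:ℝ) < s⁻¹ := by positivity
    have hsplit := intervalIntegral.integral_add_adjacent_intervals
      (fint (1/t) (s⁻¹) h1t h1ts hsi12) (fint (s⁻¹) (1/2) hsi0 hsi12 le_rfl)
    have hlogs : Real.log s = Real.log t / 2 := Real.log_sqrt ht0.le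
    have hm1 : 0 < Real.log t / 2 := by linarith
    have hbound1 : ∀ l ∈ Set.Icc (1/t) (s⁻¹), Real.log t / 2 ≤ |Real.log l| := by
      intro l hl
      have hl0 : 0 < l := lt_of_lt_of_le h1t hl.1
      have h := Real.log_le_log hl0 hl.2
      rw [Real.log_inv, hlogs] at h
      have : Real.log t / 2 ≤ -Real.log l := by linarith
      exact this.trans (neg_le_abs _)
    have hbound2 : ∀ l ∈ Set.Icc (s⁻¹) (1/2:ℝ), Real.log 2 ≤ |Real.log l| := by
      intro l hl
      have hl0 : 0 < l := lt_of_lt_of_le hsi0 hl.1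
      have h := Real.log_le_log hl0 hl.2
      rw [show (1/2:ℝ) = 2⁻¹ by norm_num, Real.log_inv] at h
      have : Real.log 2 ≤ -Real.log l := by linarith
      exact this.trans (neg_le_abs _)
    have key1 := key (1/t) (s⁻¹) (Real.log t / 2) h1t h1ts hsi12 hm1 hbound1
    rw [one_div_one_div] at key1
    have key2 := key (s⁻¹) (1/2) (Real.log 2) hsi0 hsi12 le_rfl hL0 hbound2
    rw [show (1:ℝ)/s⁻¹ = s from by rw [one_div, inv_inv]] at key2
    have hinv16 : 1/(Real.log 2)^3 ≤ 16 := by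
      rw [div_le_iff₀ (by positivity)]; nlinarith
    have hQ0 : 0 < 1/(t * s) := by positivity
    have e1 : (1/t^2) * (1/(Real.log t / 2)^3 * t) = 8 * (1/(t * (Real.log t)^3)) := by
      field_simp [hlt0.ne', ht0.ne']
      ring
    have e2 : (1/t^2) * (1/(Real.log 2)^3 * s) = (1/(Real.log 2)^3) * (1/(t * s)) := by
      have ht2 : t^2 = (t * s) * s := by rw [← hss]; ring
      rw [ht2]
      field_simp [hs0.ne', ht0.ne', hL0.ne']
    calc (1/t^2) * ∫ l in (1/t)..(1/2:ℝ), 1 / (l^2 * |Real.log l| ^ 3)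
        ≤ (1/t^2) * ((1/(Real.log t / 2)^3 * t) + (1/(Real.log 2)^3 * s)) := by
          rw [← hsplit]
          exact mul_le_mul_of_nonneg_left (add_le_add key1 key2) (by positivity)
      _ = 8 * (1/(t * (Real.log t)^3)) + (1/(Real.log 2)^3) * (1/(t * s)) := by
          rw [mul_add, e1, e2]
      _ ≤ 16 * (t ^ (-(3:ℝ)/2) + 1 / (t * (Real.log t) ^ 3)) := by
          rw [hrpow]
          have hx := mul_le_mul_of_nonneg_right hinv16 hQ0.le
          linarith
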